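/- arXiv:1109.1919 — 2 statements merged into one kernel-verified Lean document; each statement's English description precedes it below -/
import Mathlib

section
/- Injectivity half of the main theorem: Let F : G → H be a weak equivalence of cosimplicial crossed groupoids, and let (x, g, a), (x', g', a') be descent data in G. If there is a gauge transformation F(x,g,a) → F(x',g',a') in H, then there is a gauge transformation (x,g,a) → (x',g',a') in G. Hence the induced map Desc-bar(F) on gauge equivalence classes is injective. -/
/-! Crossed groupoids (= crossed modules over groupoids), following Yekutieli,
"Combinatorial descent data for gerbes". -/

structure CrossedGroupoid : Type 1 where
  Obj : Type
  Hom : Obj → Obj → Type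
  id : ∀ x, Hom x x
  comp : ∀ {x y z}, Hom y z → Hom x y → Hom x z
  inv : ∀ {x y}, Hom x y → Hom y x
  comp_assoc : ∀ {x y z w} (h : Hom z w) (g : Hom y z) (f : Hom x y),
    comp (comp h g) f = comp h (comp g f)
  id_comp : ∀ {x y} (f : Hom x y), comp (id y) f = f
  comp_id : ∀ {x y} (f : Hom x y), comp f (id x) = f
  inv_comp : ∀ {x y} (f : Hom x y), comp (inv f) f = id x
  comp_inv : ∀ {x y} (f : Hom x y), comp f (inv f) = id y
  -- the totally disconnected groupoid 𝒢₂, i.e. a family of groups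
  G2 : Obj → Type
  mul : ∀ {x}, G2 x → G2 x → G2 x
  one : ∀ x, G2 x
  inv2 : ∀ {x}, G2 x → G2 x
  mul_assoc : ∀ {x} (a b c : G2 x), mul (mul a b) c = mul a (mul b c)
  one_mul : ∀ {x} (a : G2 x), mul (one x) a = a
  mul_one : ∀ {x} (a : G2 x), mul a (one x) = a
  inv2_mul : ∀ {x} (a : G2 x), mul (inv2 a) a = one x
  -- the twisting: an action of 𝒢₁ on 𝒢₂
  Ad : ∀ {x y}, Hom x y → G2 x → G2 y
  Ad_mul : ∀ {x y} (g : Hom x y) (a b : G2 x), Ad g (mul a b) = mul (Ad g a) (Ad g b)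
  Ad_one : ∀ {x y} (g : Hom x y), Ad g (one x) = one y
  Ad_id : ∀ {x} (a : G2 x), Ad (id x) a = a
  Ad_comp : ∀ {x y z} (h : Hom y z) (g : Hom x y) (a : G2 x),
    Ad (comp h g) a = Ad h (Ad g a)
  -- the feedback D : 𝒢₂ → 𝒢₁, identity on objects
  D : ∀ {x}, G2 x → Hom x x
  D_mul : ∀ {x} (a b : G2 x), D (mul a b) = comp (D a) (D b)
  D_one : ∀ x, D (one x) = id x
  -- equivariance of the feedback
  D_Ad : ∀ {x y} (g : Hom x y) (a : G2 x), D (Ad g a) = comp (comp g (D a)) (inv g)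
  -- Peiffer condition
  peiffer : ∀ {x} (a b : G2 x), Ad (D a) b = mul (mul a b) (inv2 a)

namespace CrossedGroupoid

/-- Transport of 1-morphisms along equalities of objects. -/
def hcast (G : CrossedGroupoid) {x x' y y' : G.Obj} (ex : x = x') (ey : y = y')
    (f : G.Hom x y) : G.Hom x' y' := ey ▸ ex ▸ f

/-- Transport of 2-morphisms along an equality of objects. -/
def cast2 (G : CrossedGroupoid) {x x' : G.Obj} (e : x = x') (a : G.G2 x) : G.G2 x' := e ▸ a

/-- The relation "isomorphic in 𝒢₁". -/
def pi0Rel (G : CrossedGroupoid) : G.Obj → G.Obj → Prop := fun x y => Nonempty (G.Hom x y)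

/-- π₀ of a crossed groupoid: isomorphism classes of objects of 𝒢₁. -/
def pi0 (G : CrossedGroupoid) : Type := Quot G.pi0Rel

/-- The right action relation on a hom-set: g' = g ∘ D(a). -/
def homRel (G : CrossedGroupoid) (x x' : G.Obj) : G.Hom x x' → G.Hom x x' → Prop :=
  fun g g' => ∃ a : G.G2 x, g' = G.comp g (G.D a)

/-- π₁(G, x, x') := 𝒢₁(x,x') / 𝒢₂(x). -/
def pi1' (G : CrossedGroupoid) (x x' : G.Obj) : Type := Quot (G.homRel x x')

/-- π₁(G, x) = Coker(D : 𝒢₂(x) → 𝒢₁(x)) as a quotient set. -/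
def pi1 (G : CrossedGroupoid) (x : G.Obj) : Type := G.pi1' x x

/-- π₂(G, x) = Ker(D : 𝒢₂(x) → 𝒢₁(x)). -/
def pi2 (G : CrossedGroupoid) (x : G.Obj) : Type := {a : G.G2 x // G.D a = G.id x}

end CrossedGroupoid

/-- A morphism of crossed groupoids. -/
structure CrossedGroupoidHom (G H : CrossedGroupoid) where
  obj : G.Obj → H.Obj
  map1 : ∀ {x y : G.Obj}, G.Hom x y → H.Hom (obj x) (obj y)
  map2 : ∀ {x : G.Obj}, G.G2 x → H.G2 (obj x)
  map1_comp : ∀ {x y z : G.Obj} (g : G.Hom y z) (f : G.Hom x y),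
    map1 (G.comp g f) = H.comp (map1 g) (map1 f)
  map1_id : ∀ x : G.Obj, map1 (G.id x) = H.id (obj x)
  map2_mul : ∀ {x : G.Obj} (a b : G.G2 x), map2 (G.mul a b) = H.mul (map2 a) (map2 b)
  map_D : ∀ {x : G.Obj} (a : G.G2 x), map1 (G.D a) = H.D (map2 a)
  map_Ad : ∀ {x y : G.Obj} (g : G.Hom x y) (a : G.G2 x),
    map2 (G.Ad g a) = H.Ad (map1 g) (map2 a)

namespace CrossedGroupoidHom

/-- Identity morphism of crossed groupoids. -/
def id (G : CrossedGroupoid) : CrossedGroupoidHom G G where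
  obj := fun x => x
  map1 := fun f => f
  map2 := fun a => a
  map1_comp := fun _ _ => rfl
  map1_id := fun _ => rfl
  map2_mul := fun _ _ => rfl
  map_D := fun _ => rfl
  map_Ad := fun _ _ => rfl

/-- Composition of morphisms of crossed groupoids. -/
def comp {G H K : CrossedGroupoid} (F₂ : CrossedGroupoidHom H K) (F₁ : CrossedGroupoidHom G H) :
    CrossedGroupoidHom G K where
  obj := fun x => F₂.obj (F₁.obj x)
  map1 := fun f => F₂.map1 (F₁.map1 f)
  map2 := fun a => F₂.map2 (F₁.map2 a)
  map1_comp := fun g f => by (try dsimp only); rw [F₁.map1_comp, F₂.map1_comp]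
  map1_id := fun x => by (try dsimp only); rw [F₁.map1_id, F₂.map1_id]
  map2_mul := fun a b => by (try dsimp only); rw [F₁.map2_mul, F₂.map2_mul]
  map_D := fun a => by (try dsimp only); rw [F₁.map_D, F₂.map_D]
  map_Ad := fun g a => by (try dsimp only); rw [F₁.map_Ad, F₂.map_Ad]

variable {G H : CrossedGroupoid}

/-- The induced map on π₀. -/
def pi0map (F : CrossedGroupoidHom G H) : G.pi0 → H.pi0 :=
  Quot.map F.obj (fun _ _ h => ⟨F.map1 h.some⟩)

/-- The induced map on π₁(−, x, x'). -/
def pi1'map (F : CrossedGroupoidHom G H) (x x' : G.Obj) :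
    G.pi1' x x' → H.pi1' (F.obj x) (F.obj x') :=
  Quot.map F.map1 (by
    rintro g g' ⟨a, rfl⟩
    exact ⟨F.map2 a, by rw [F.map1_comp, F.map_D]⟩)

/-- The induced map on π₁(−, x). -/
def pi1map (F : CrossedGroupoidHom G H) (x : G.Obj) : G.pi1 x → H.pi1 (F.obj x) :=
  F.pi1'map x x

/-- The induced map on π₂(−, x). -/
def pi2map (F : CrossedGroupoidHom G H) (x : G.Obj) : G.pi2 x → H.pi2 (F.obj x) :=
  fun a => ⟨F.map2 a.1, by rw [← F.map_D, a.2, F.map1_id]⟩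

/-- A weak equivalence of crossed groupoids: bijective on π₀, π₁ and π₂. -/
def IsWeakEquiv (F : CrossedGroupoidHom G H) : Prop :=
  Function.Bijective F.pi0map ∧ (∀ x, Function.Bijective (F.pi1map x)) ∧
    (∀ x, Function.Bijective (F.pi2map x))

end CrossedGroupoidHom

/-! ### Combinatorics of the simplex category -/

/-- The vertex (i) of Δ^q, as a monotone map Δ⁰ → Δ^q. -/
def vtxMap {q : ℕ} (i : Fin (q + 1)) : Fin 1 →o Fin (q + 1) :=
  ⟨fun _ => i, fun _ _ _ => le_rfl⟩

/-- The edge (i,j) of Δ^q, as a monotone map Δ¹ → Δ^q. -/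
def edgeMap {q : ℕ} (i j : Fin (q + 1)) (h : i ≤ j) : Fin 2 →o Fin (q + 1) :=
  ⟨fun k => if (k : ℕ) = 0 then i else j, by
    intro a b hab
    have hab' : (a : ℕ) ≤ (b : ℕ) := hab
    show (if (a : ℕ) = 0 then i else j) ≤ (if (b : ℕ) = 0 then i else j)
    by_cases ha : (a : ℕ) = 0
    · by_cases hb : (b : ℕ) = 0
      · rw [if_pos ha, if_pos hb]
      · rw [if_pos ha, if_neg hb]; exact h
    · have hb : ¬ (b : ℕ) = 0 := fun hb0 => ha (Nat.le_zero.mp (hb0 ▸ hab'))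
      rw [if_neg ha, if_neg hb]⟩

/-- The triangle (i,j,k) of Δ^q, as a monotone map Δ² → Δ^q. -/
def triMap {q : ℕ} (i j k : Fin (q + 1)) (hij : i ≤ j) (hjk : j ≤ k) :
    Fin 3 →o Fin (q + 1) :=
  ⟨fun m => if (m : ℕ) = 0 then i else if (m : ℕ) = 1 then j else k, by
    intro a b hab
    have hab' : (a : ℕ) ≤ (b : ℕ) := hab
    show (if (a : ℕ) = 0 then i else if (a : ℕ) = 1 then j else k) ≤
      (if (b : ℕ) = 0 then i else if (b : ℕ) = 1 then j else k)
    by_cases ha0 : (a : ℕ) = 0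
    · by_cases hb0 : (b : ℕ) = 0
      · rw [if_pos ha0, if_pos hb0]
      · by_cases hb1 : (b : ℕ) = 1
        · rw [if_pos ha0, if_neg hb0, if_pos hb1]; exact hij
        · rw [if_pos ha0, if_neg hb0, if_neg hb1]; exact hij.trans hjk
    · by_cases ha1 : (a : ℕ) = 1
      · have hb0 : ¬ (b : ℕ) = 0 := by omega
        by_cases hb1 : (b : ℕ) = 1
        · rw [if_neg ha0, if_pos ha1, if_neg hb0, if_pos hb1]
        · rw [if_neg ha0, if_pos ha1, if_neg hb0, if_neg hb1]; exact hjk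
      · have hb0 : ¬ (b : ℕ) = 0 := by omega
        have hb1 : ¬ (b : ℕ) = 1 := by omega
        rw [if_neg ha0, if_neg ha1, if_neg hb0, if_neg hb1]⟩

theorem comp_vtxMap {p q : ℕ} (α : Fin (p + 1) →o Fin (q + 1)) (i : Fin (p + 1)) :
    α.comp (vtxMap i) = vtxMap (α i) := rfl

/-! ### Cosimplicial crossed groupoids -/

/-- A cosimplicial crossed groupoid: a functor Δ → CrGrpd. -/
structure CosimplicialCrossedGroupoid : Type 1 where
  obj : ℕ → CrossedGroupoid
  map : ∀ {p q : ℕ}, (Fin (p + 1) →o Fin (q + 1)) → CrossedGroupoidHom (obj p) (obj q)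
  map_id : ∀ p, map (OrderHom.id : Fin (p + 1) →o Fin (p + 1)) = CrossedGroupoidHom.id (obj p)
  map_comp : ∀ {p q r : ℕ} (β : Fin (q + 1) →o Fin (r + 1)) (α : Fin (p + 1) →o Fin (q + 1)),
    map (β.comp α) = (map β).comp (map α)

namespace CosimplicialCrossedGroupoid

variable (G : CosimplicialCrossedGroupoid)

theorem obj_comp {p q r : ℕ} (β : Fin (q + 1) →o Fin (r + 1)) (α : Fin (p + 1) →o Fin (q + 1))
    (x : (G.obj p).Obj) :
    (G.map β).obj ((G.map α).obj x) = (G.map (β.comp α)).obj x := by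
  rw [G.map_comp]; rfl

/-- The object x of G⁰ pushed to the vertex (i) of Δ^q. -/
def X (x : (G.obj 0).Obj) (q : ℕ) (i : Fin (q + 1)) : (G.obj q).Obj :=
  (G.map (vtxMap i)).obj x

theorem X_push (x : (G.obj 0).Obj) {p q : ℕ} (α : Fin (p + 1) →o Fin (q + 1))
    (i : Fin (p + 1)) : (G.map α).obj (G.X x p i) = G.X x q (α i) := by
  unfold X
  rw [obj_comp, comp_vtxMap]

/-- Pushing a 1-morphism between vertex objects along α. -/
def push1 {x : (G.obj 0).Obj} {p q : ℕ} (α : Fin (p + 1) →o Fin (q + 1))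
    {i j : Fin (p + 1)} (g : (G.obj p).Hom (G.X x p i) (G.X x p j)) :
    (G.obj q).Hom (G.X x q (α i)) (G.X x q (α j)) :=
  (G.obj q).hcast (G.X_push x α i) (G.X_push x α j) ((G.map α).map1 g)

/-- Pushing a 2-morphism at a vertex object along α. -/
def push2 {x : (G.obj 0).Obj} {p q : ℕ} (α : Fin (p + 1) →o Fin (q + 1))
    {i : Fin (p + 1)} (a : (G.obj p).G2 (G.X x p i)) :
    (G.obj q).G2 (G.X x q (α i)) :=
  (G.obj q).cast2 (G.X_push x α i) ((G.map α).map2 a)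

/-- Yekutieli's combinatorial descent conditions (Definition 1.5):
the failure-of-1-cocycle condition and the twisted 2-cocycle condition. -/
def IsDescent (x : (G.obj 0).Obj)
    (g : (G.obj 1).Hom (G.X x 1 0) (G.X x 1 1))
    (a : (G.obj 2).G2 (G.X x 2 0)) : Prop :=
  ((G.obj 2).comp ((G.obj 2).comp ((G.obj 2).inv (G.push1 (edgeMap 0 2 (by decide)) g))
      (G.push1 (edgeMap 1 2 (by decide)) g)) (G.push1 (edgeMap 0 1 (by decide)) g)
    = (G.obj 2).D a)
  ∧
  ((G.obj 3).mul ((G.obj 3).mul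
        ((G.obj 3).inv2 (G.push2 (triMap 0 1 3 (by decide) (by decide)) a))
        (G.push2 (triMap 0 2 3 (by decide) (by decide)) a))
      (G.push2 (triMap 0 1 2 (by decide) (by decide)) a)
    = (G.obj 3).Ad ((G.obj 3).inv (G.push1 (edgeMap 0 1 (by decide)) g))
        (G.push2 (triMap 1 2 3 (by decide) (by decide)) a))

/-- A combinatorial descent datum (Definition 1.5). -/
structure Desc (G : CosimplicialCrossedGroupoid) where
  x : (G.obj 0).Obj
  g : (G.obj 1).Hom (G.X x 1 0) (G.X x 1 1)
  a : (G.obj 2).G2 (G.X x 2 0)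
  isDescent : G.IsDescent x g a

/-- The Yekutieli gauge-transformation conditions (Definition 1.7) for a pair (f, c). -/
def IsGauge (x : (G.obj 0).Obj) (g : (G.obj 1).Hom (G.X x 1 0) (G.X x 1 1))
    (a : (G.obj 2).G2 (G.X x 2 0))
    (x' : (G.obj 0).Obj) (g' : (G.obj 1).Hom (G.X x' 1 0) (G.X x' 1 1))
    (a' : (G.obj 2).G2 (G.X x' 2 0))
    (f : (G.obj 0).Hom x x') (c : (G.obj 1).G2 (G.X x 1 0)) : Prop :=
  (g' = (G.obj 1).comp ((G.obj 1).comp ((G.obj 1).comp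
      ((G.map (vtxMap (1 : Fin 2))).map1 f) g) ((G.obj 1).D c))
      ((G.obj 1).inv ((G.map (vtxMap (0 : Fin 2))).map1 f)))
  ∧
  (a' = (G.obj 2).Ad ((G.map (vtxMap (0 : Fin 3))).map1 f)
    ((G.obj 2).mul ((G.obj 2).mul ((G.obj 2).mul
        ((G.obj 2).inv2 (G.push2 (edgeMap 0 2 (by decide)) c)) a)
        ((G.obj 2).Ad ((G.obj 2).inv (G.push1 (edgeMap 0 1 (by decide)) g))
          (G.push2 (edgeMap 1 2 (by decide)) c)))
      (G.push2 (edgeMap 0 1 (by decide)) c)))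

/-- Gauge equivalence of descent data. -/
def GaugeEquiv (P Q : G.Desc) : Prop :=
  ∃ (f : (G.obj 0).Hom P.x Q.x) (c : (G.obj 1).G2 (G.X P.x 1 0)),
    G.IsGauge P.x P.g P.a Q.x Q.g Q.a f c

/-- The explicit formula for the transported 2-morphism a'
(Definition 1.7(ii) / Lemma 1.9). -/
def transportA {x x' : (G.obj 0).Obj} (f : (G.obj 0).Hom x x')
    (g : (G.obj 1).Hom (G.X x 1 0) (G.X x 1 1))
    (a : (G.obj 2).G2 (G.X x 2 0)) (c : (G.obj 1).G2 (G.X x 1 0)) :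
    (G.obj 2).G2 (G.X x' 2 0) :=
  (G.obj 2).Ad ((G.map (vtxMap (0 : Fin 3))).map1 f)
    ((G.obj 2).mul ((G.obj 2).mul ((G.obj 2).mul
        ((G.obj 2).inv2 (G.push2 (edgeMap 0 2 (by decide)) c)) a)
        ((G.obj 2).Ad ((G.obj 2).inv (G.push1 (edgeMap 0 1 (by decide)) g))
          (G.push2 (edgeMap 1 2 (by decide)) c)))
      (G.push2 (edgeMap 0 1 (by decide)) c))

end CosimplicialCrossedGroupoid

/-- A morphism of cosimplicial crossed groupoids. -/
structure CosimplicialMor (G H : CosimplicialCrossedGroupoid) where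
  app : ∀ p, CrossedGroupoidHom (G.obj p) (H.obj p)
  naturality : ∀ {p q : ℕ} (α : Fin (p + 1) →o Fin (q + 1)),
    (app q).comp (G.map α) = (H.map α).comp (app p)

namespace CosimplicialMor

variable {G H : CosimplicialCrossedGroupoid}

theorem app_X (F : CosimplicialMor G H) (x : (G.obj 0).Obj) (q : ℕ) (i : Fin (q + 1)) :
    (F.app q).obj (G.X x q i) = H.X ((F.app 0).obj x) q i :=
  congrFun (congrArg CrossedGroupoidHom.obj (F.naturality (vtxMap i))) x

/-- Image of an object of G⁰. -/
def objD (F : CosimplicialMor G H) (x : (G.obj 0).Obj) : (H.obj 0).Obj := (F.app 0).obj x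

/-- Image of a 1-morphism in dimension 0. -/
def mapF (F : CosimplicialMor G H) {x x' : (G.obj 0).Obj} (f : (G.obj 0).Hom x x') :
    (H.obj 0).Hom (F.objD x) (F.objD x') := (F.app 0).map1 f

/-- Image of the 1-morphism part of a descent datum. -/
def mapG (F : CosimplicialMor G H) {x : (G.obj 0).Obj}
    (g : (G.obj 1).Hom (G.X x 1 0) (G.X x 1 1)) :
    (H.obj 1).Hom (H.X (F.objD x) 1 0) (H.X (F.objD x) 1 1) :=
  (H.obj 1).hcast (F.app_X x 1 0) (F.app_X x 1 1) ((F.app 1).map1 g)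

/-- Image of the 2-morphism part of a descent datum. -/
def mapA (F : CosimplicialMor G H) {x : (G.obj 0).Obj} (a : (G.obj 2).G2 (G.X x 2 0)) :
    (H.obj 2).G2 (H.X (F.objD x) 2 0) :=
  (H.obj 2).cast2 (F.app_X x 2 0) ((F.app 2).map2 a)

/-- Image of the 2-morphism part of a gauge transformation. -/
def mapC (F : CosimplicialMor G H) {x : (G.obj 0).Obj} (c : (G.obj 1).G2 (G.X x 1 0)) :
    (H.obj 1).G2 (H.X (F.objD x) 1 0) :=
  (H.obj 1).cast2 (F.app_X x 1 0) ((F.app 1).map2 c)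

/-- A weak equivalence of cosimplicial crossed groupoids. -/
def IsWeakEquiv (F : CosimplicialMor G H) : Prop := ∀ p, (F.app p).IsWeakEquiv

end CosimplicialMor


/-! ### Auxiliary lemmas -/

namespace CrossedGroupoid

variable (K : CrossedGroupoid)

theorem inv_eq_of {x y : K.Obj} {f : K.Hom x y} {g : K.Hom y x}
    (h : K.comp g f = K.id x) : g = K.inv f := by
  calc g = K.comp g (K.comp f (K.inv f)) := by rw [K.comp_inv, K.comp_id]
  _ = K.comp (K.comp g f) (K.inv f) := (K.comp_assoc _ _ _).symm
  _ = K.inv f := by rw [h, K.id_comp]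

theorem inv_inv' {x y : K.Obj} (f : K.Hom x y) : K.inv (K.inv f) = f :=
  (K.inv_eq_of (K.comp_inv f)).symm

theorem inv_id {x : K.Obj} : K.inv (K.id x) = K.id x :=
  (K.inv_eq_of (K.id_comp (K.id x))).symm

theorem inv_comp_cancel {x y z : K.Obj} (f : K.Hom x y) (h : K.Hom z x) :
    K.comp (K.inv f) (K.comp f h) = h := by
  rw [← K.comp_assoc, K.inv_comp, K.id_comp]

theorem inv_comp'' {x y z : K.Obj} (g : K.Hom y z) (f : K.Hom x y) :
    K.inv (K.comp g f) = K.comp (K.inv f) (K.inv g) := by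
  refine (K.inv_eq_of ?_).symm
  rw [K.comp_assoc, K.inv_comp_cancel, K.inv_comp]

theorem comp_inv_cancel {x y z : K.Obj} (f : K.Hom x y) (h : K.Hom z y) :
    K.comp f (K.comp (K.inv f) h) = h := by
  rw [← K.comp_assoc, K.comp_inv, K.id_comp]

instance instGroupG2 (x : K.Obj) : Group (K.G2 x) where
  mul := K.mul
  one := K.one x
  inv := K.inv2
  mul_assoc := K.mul_assoc
  one_mul := K.one_mul
  mul_one := K.mul_one
  inv_mul_cancel := K.inv2_mul

theorem mul_def {x : K.Obj} (a b : K.G2 x) : K.mul a b = a * b := rfl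
theorem one_def (x : K.Obj) : K.one x = 1 := rfl
theorem inv2_def {x : K.Obj} (a : K.G2 x) : K.inv2 a = a⁻¹ := rfl

theorem D_inv2 {x : K.Obj} (a : K.G2 x) : K.D (K.inv2 a) = K.inv (K.D a) :=
  K.inv_eq_of (by rw [← K.D_mul, K.inv2_mul, K.D_one])

theorem Ad_inv2 {x y : K.Obj} (g : K.Hom x y) (a : K.G2 x) :
    K.Ad g (K.inv2 a) = K.inv2 (K.Ad g a) := by
  have h : K.Ad g (K.inv2 a) * K.Ad g a = 1 := by
    rw [← K.mul_def, ← K.Ad_mul, K.inv2_mul, K.Ad_one, K.one_def]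
  rw [K.inv2_def]
  exact eq_inv_of_mul_eq_one_left h

/-! ### Cast lemmas -/

theorem hcast_self {x y : K.Obj} (e : x = x) (e' : y = y) (f : K.Hom x y) :
    K.hcast e e' f = f := rfl

theorem hcast_irrel {x x' y y' : K.Obj} (e1 e2 : x = x') (e1' e2' : y = y')
    (f : K.Hom x y) : K.hcast e1 e1' f = K.hcast e2 e2' f := rfl

theorem cast2_self {x : K.Obj} (e : x = x) (a : K.G2 x) : K.cast2 e a = a := rfl

theorem cast2_irrel {x x' : K.Obj} (e1 e2 : x = x') (a : K.G2 x) :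
    K.cast2 e1 a = K.cast2 e2 a := rfl

theorem hcast_hcast {x x' x'' y y' y'' : K.Obj} (ex : x = x') (ex' : x' = x'')
    (ey : y = y') (ey' : y' = y'') (f : K.Hom x y) :
    K.hcast ex' ey' (K.hcast ex ey f) = K.hcast (ex.trans ex') (ey.trans ey') f := by
  subst ex; subst ey; rfl

theorem cast2_cast2 {x x' x'' : K.Obj} (e : x = x') (e' : x' = x'') (a : K.G2 x) :
    K.cast2 e' (K.cast2 e a) = K.cast2 (e.trans e') a := by subst e; rfl

theorem cast2_symm_cancel {x x' : K.Obj} (e : x = x') (a : K.G2 x') :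
    K.cast2 e (K.cast2 e.symm a) = a := by subst e; rfl

theorem cast2_symm_cancel' {x x' : K.Obj} (e : x = x') (a : K.G2 x) :
    K.cast2 e.symm (K.cast2 e a) = a := by subst e; rfl

theorem hcast_comp {x y z x' y' z' : K.Obj} (ex : x = x') (ey : y = y') (ez : z = z')
    (g : K.Hom y z) (f : K.Hom x y) :
    K.hcast ex ez (K.comp g f) = K.comp (K.hcast ey ez g) (K.hcast ex ey f) := by
  subst ex; subst ey; subst ez; rfl

theorem hcast_inv {x y x' y' : K.Obj} (ex : x = x') (ey : y = y') (f : K.Hom x y) :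
    K.hcast ey ex (K.inv f) = K.inv (K.hcast ex ey f) := by subst ex; subst ey; rfl

theorem hcast_id {x x' : K.Obj} (e : x = x') : K.hcast e e (K.id x) = K.id x' := by
  subst e; rfl

theorem cast2_mul {x x' : K.Obj} (e : x = x') (a b : K.G2 x) :
    K.cast2 e (K.mul a b) = K.mul (K.cast2 e a) (K.cast2 e b) := by subst e; rfl

theorem cast2_inv2 {x x' : K.Obj} (e : x = x') (a : K.G2 x) :
    K.cast2 e (K.inv2 a) = K.inv2 (K.cast2 e a) := by subst e; rfl

theorem cast2_one {x x' : K.Obj} (e : x = x') : K.cast2 e (K.one x) = K.one x' := by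
  subst e; rfl

theorem D_cast2 {x x' : K.Obj} (e : x = x') (a : K.G2 x) :
    K.D (K.cast2 e a) = K.hcast e e (K.D a) := by subst e; rfl

theorem Ad_hcast {x y x' y' : K.Obj} (ex : x = x') (ey : y = y') (g : K.Hom x y)
    (a : K.G2 x) : K.Ad (K.hcast ex ey g) (K.cast2 ex a) = K.cast2 ey (K.Ad g a) := by
  subst ex; subst ey; rfl

end CrossedGroupoid

namespace CrossedGroupoidHom

variable {K L : CrossedGroupoid}

theorem map1_inv (F : CrossedGroupoidHom K L) {x y : K.Obj} (f : K.Hom x y) :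
    F.map1 (K.inv f) = L.inv (F.map1 f) :=
  L.inv_eq_of (by rw [← F.map1_comp, K.inv_comp, F.map1_id])

theorem map2_one (F : CrossedGroupoidHom K L) (x : K.Obj) :
    F.map2 (K.one x) = L.one (F.obj x) := by
  have h : F.map2 (K.one x) * F.map2 (K.one x) = F.map2 (K.one x) * L.one (F.obj x) := by
    rw [← L.mul_def, ← F.map2_mul, K.mul_one, L.one_def, mul_one]
  exact mul_left_cancel h

theorem map2_inv2 (F : CrossedGroupoidHom K L) {x : K.Obj} (a : K.G2 x) :
    F.map2 (K.inv2 a) = L.inv2 (F.map2 a) := by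
  have h : F.map2 (K.inv2 a) * F.map2 a = 1 := by
    rw [← L.mul_def, ← F.map2_mul, K.inv2_mul, F.map2_one, L.one_def]
  rw [L.inv2_def]
  exact eq_inv_of_mul_eq_one_left h

theorem congr_obj {A B : CrossedGroupoidHom K L} (h : A = B) (x : K.Obj) :
    A.obj x = B.obj x := by rw [h]

theorem congr_map1 {A B : CrossedGroupoidHom K L} (h : A = B) {x y : K.Obj}
    (f : K.Hom x y) :
    B.map1 f = L.hcast (congr_obj h x) (congr_obj h y) (A.map1 f) := by subst h; rfl

theorem congr_map2 {A B : CrossedGroupoidHom K L} (h : A = B) {x : K.Obj}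
    (a : K.G2 x) : B.map2 a = L.cast2 (congr_obj h x) (A.map2 a) := by subst h; rfl

theorem map1_hcast (F : CrossedGroupoidHom K L) {x y x' y' : K.Obj}
    (ex : x = x') (ey : y = y') (f : K.Hom x y) :
    F.map1 (K.hcast ex ey f)
      = L.hcast (congrArg F.obj ex) (congrArg F.obj ey) (F.map1 f) := by
  subst ex; subst ey; rfl

theorem map2_cast2 (F : CrossedGroupoidHom K L) {x x' : K.Obj} (e : x = x')
    (a : K.G2 x) : F.map2 (K.cast2 e a) = L.cast2 (congrArg F.obj e) (F.map2 a) := by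
  subst e; rfl

end CrossedGroupoidHom

/-! ### Push lemmas for cosimplicial crossed groupoids -/

theorem edgeMap_zero {q : ℕ} (i j : Fin (q + 1)) (h : i ≤ j) :
    edgeMap i j h 0 = i := rfl

theorem edgeMap_one {q : ℕ} (i j : Fin (q + 1)) (h : i ≤ j) :
    edgeMap i j h 1 = j := rfl

namespace CosimplicialCrossedGroupoid

variable (G : CosimplicialCrossedGroupoid)

/-- Push of a mixed 1-morphism between vertex objects along α. -/
def push1' {x x' : (G.obj 0).Obj} {p q : ℕ} (α : Fin (p + 1) →o Fin (q + 1))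
    {i j : Fin (p + 1)} (g : (G.obj p).Hom (G.X x p i) (G.X x' p j)) :
    (G.obj q).Hom (G.X x q (α i)) (G.X x' q (α j)) :=
  (G.obj q).hcast (G.X_push x α i) (G.X_push x' α j) ((G.map α).map1 g)

theorem push1_eq {x : (G.obj 0).Obj} {p q : ℕ} (α : Fin (p + 1) →o Fin (q + 1))
    {i j : Fin (p + 1)} (g : (G.obj p).Hom (G.X x p i) (G.X x p j)) :
    G.push1 α g = G.push1' α g := rfl

theorem push1'_comp {x x' x'' : (G.obj 0).Obj} {p q : ℕ}
    (α : Fin (p + 1) →o Fin (q + 1)) {i j k : Fin (p + 1)}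
    (g : (G.obj p).Hom (G.X x' p j) (G.X x'' p k))
    (f : (G.obj p).Hom (G.X x p i) (G.X x' p j)) :
    G.push1' α ((G.obj p).comp g f)
      = (G.obj q).comp (G.push1' α g) (G.push1' α f) := by
  unfold push1'
  rw [(G.map α).map1_comp, (G.obj q).hcast_comp (G.X_push x α i) (G.X_push x' α j)]

theorem push1'_inv {x x' : (G.obj 0).Obj} {p q : ℕ} (α : Fin (p + 1) →o Fin (q + 1))
    {i j : Fin (p + 1)} (f : (G.obj p).Hom (G.X x p i) (G.X x' p j)) :
    G.push1' α ((G.obj p).inv f) = (G.obj q).inv (G.push1' α f) := by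
  unfold push1'
  rw [(G.map α).map1_inv, (G.obj q).hcast_inv]

theorem push1'_D {x : (G.obj 0).Obj} {p q : ℕ} (α : Fin (p + 1) →o Fin (q + 1))
    {i : Fin (p + 1)} (a : (G.obj p).G2 (G.X x p i)) :
    G.push1' α ((G.obj p).D a) = (G.obj q).D (G.push2 α a) := by
  unfold push1' push2
  rw [(G.map α).map_D, (G.obj q).D_cast2]

theorem push2_mul {x : (G.obj 0).Obj} {p q : ℕ} (α : Fin (p + 1) →o Fin (q + 1))
    {i : Fin (p + 1)} (a b : (G.obj p).G2 (G.X x p i)) :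
    G.push2 α ((G.obj p).mul a b)
      = (G.obj q).mul (G.push2 α a) (G.push2 α b) := by
  unfold push2
  rw [(G.map α).map2_mul, (G.obj q).cast2_mul]

theorem push2_inv2 {x : (G.obj 0).Obj} {p q : ℕ} (α : Fin (p + 1) →o Fin (q + 1))
    {i : Fin (p + 1)} (a : (G.obj p).G2 (G.X x p i)) :
    G.push2 α ((G.obj p).inv2 a) = (G.obj q).inv2 (G.push2 α a) := by
  unfold push2
  rw [(G.map α).map2_inv2, (G.obj q).cast2_inv2]

theorem push2_Ad {x x' : (G.obj 0).Obj} {p q : ℕ} (α : Fin (p + 1) →o Fin (q + 1))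
    {i j : Fin (p + 1)} (g : (G.obj p).Hom (G.X x p i) (G.X x' p j))
    (a : (G.obj p).G2 (G.X x p i)) :
    G.push2 α ((G.obj p).Ad g a) = (G.obj q).Ad (G.push1' α g) (G.push2 α a) := by
  unfold push2 push1'
  rw [(G.map α).map_Ad, (G.obj q).Ad_hcast]

theorem push1'_vtxMap {x x' : (G.obj 0).Obj} {p q : ℕ}
    (α : Fin (p + 1) →o Fin (q + 1)) (i : Fin (p + 1)) (f : (G.obj 0).Hom x x') :
    G.push1' α ((G.map (vtxMap i)).map1 f) = (G.map (vtxMap (α i))).map1 f := by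
  have h : G.map (vtxMap (α i)) = (G.map α).comp (G.map (vtxMap i)) := by
    rw [← G.map_comp, comp_vtxMap]
  have e := CrossedGroupoidHom.congr_map1 h f
  unfold push1'
  rw [show ((G.map α).comp (G.map (vtxMap i))).map1 f
      = (G.map α).map1 ((G.map (vtxMap i)).map1 f) from rfl] at e
  erw [e, (G.obj q).hcast_hcast]
  exact (G.obj q).hcast_self _ _ _

theorem push2_vtxMap {x : (G.obj 0).Obj} {p q : ℕ}
    (α : Fin (p + 1) →o Fin (q + 1)) (i : Fin (p + 1)) (b : (G.obj 0).G2 x) :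
    G.push2 α ((G.map (vtxMap i)).map2 b) = (G.map (vtxMap (α i))).map2 b := by
  have h : G.map (vtxMap (α i)) = (G.map α).comp (G.map (vtxMap i)) := by
    rw [← G.map_comp, comp_vtxMap]
  have e := CrossedGroupoidHom.congr_map2 h b
  unfold push2
  rw [show ((G.map α).comp (G.map (vtxMap i))).map2 b
      = (G.map α).map2 ((G.map (vtxMap i)).map2 b) from rfl] at e
  erw [e, (G.obj q).cast2_cast2]
  exact (G.obj q).cast2_self _ _

theorem push1'_edge_zero {x x' : (G.obj 0).Obj} {q : ℕ} (i j : Fin (q + 1))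
    (hij : i ≤ j) (f : (G.obj 0).Hom x x') :
    G.push1' (edgeMap i j hij) ((G.map (vtxMap (0 : Fin 2))).map1 f)
      = (G.map (vtxMap i)).map1 f :=
  G.push1'_vtxMap (edgeMap i j hij) 0 f

theorem push1'_edge_one {x x' : (G.obj 0).Obj} {q : ℕ} (i j : Fin (q + 1))
    (hij : i ≤ j) (f : (G.obj 0).Hom x x') :
    G.push1' (edgeMap i j hij) ((G.map (vtxMap (1 : Fin 2))).map1 f)
      = (G.map (vtxMap j)).map1 f :=
  G.push1'_vtxMap (edgeMap i j hij) 1 f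

theorem push2_edge_zero {x : (G.obj 0).Obj} {q : ℕ} (i j : Fin (q + 1))
    (hij : i ≤ j) (b : (G.obj 0).G2 x) :
    G.push2 (edgeMap i j hij) ((G.map (vtxMap (0 : Fin 2))).map2 b)
      = (G.map (vtxMap i)).map2 b :=
  G.push2_vtxMap (edgeMap i j hij) 0 b

theorem push2_edge_one {x : (G.obj 0).Obj} {q : ℕ} (i j : Fin (q + 1))
    (hij : i ≤ j) (b : (G.obj 0).G2 x) :
    G.push2 (edgeMap i j hij) ((G.map (vtxMap (1 : Fin 2))).map2 b)
      = (G.map (vtxMap j)).map2 b :=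
  G.push2_vtxMap (edgeMap i j hij) 1 b

end CosimplicialCrossedGroupoid

namespace CosimplicialMor

variable {G H : CosimplicialCrossedGroupoid} (F : CosimplicialMor G H)

/-- Mixed image of 1-morphisms between vertex objects. -/
def ff1 {x x' : (G.obj 0).Obj} {p : ℕ} {i j : Fin (p + 1)}
    (g : (G.obj p).Hom (G.X x p i) (G.X x' p j)) :
    (H.obj p).Hom (H.X (F.objD x) p i) (H.X (F.objD x') p j) :=
  (H.obj p).hcast (F.app_X x p i) (F.app_X x' p j) ((F.app p).map1 g)

/-- Image of 2-morphisms at vertex objects. -/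
def ff2 {x : (G.obj 0).Obj} {p : ℕ} {i : Fin (p + 1)}
    (a : (G.obj p).G2 (G.X x p i)) : (H.obj p).G2 (H.X (F.objD x) p i) :=
  (H.obj p).cast2 (F.app_X x p i) ((F.app p).map2 a)

theorem mapG_eq {x : (G.obj 0).Obj} (g : (G.obj 1).Hom (G.X x 1 0) (G.X x 1 1)) :
    F.mapG g = F.ff1 g := rfl

theorem mapA_eq {x : (G.obj 0).Obj} (a : (G.obj 2).G2 (G.X x 2 0)) :
    F.mapA a = F.ff2 a := rfl

theorem ff1_comp {x x' x'' : (G.obj 0).Obj} {p : ℕ} {i j k : Fin (p + 1)}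
    (g : (G.obj p).Hom (G.X x' p j) (G.X x'' p k))
    (f : (G.obj p).Hom (G.X x p i) (G.X x' p j)) :
    F.ff1 ((G.obj p).comp g f) = (H.obj p).comp (F.ff1 g) (F.ff1 f) := by
  unfold ff1
  erw [(F.app p).map1_comp, (H.obj p).hcast_comp (F.app_X x p i) (F.app_X x' p j)]
  rfl

theorem ff1_inv {x x' : (G.obj 0).Obj} {p : ℕ} {i j : Fin (p + 1)}
    (f : (G.obj p).Hom (G.X x p i) (G.X x' p j)) :
    F.ff1 ((G.obj p).inv f) = (H.obj p).inv (F.ff1 f) := by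
  unfold ff1
  erw [(F.app p).map1_inv, (H.obj p).hcast_inv]

theorem ff1_D {x : (G.obj 0).Obj} {p : ℕ} {i : Fin (p + 1)}
    (a : (G.obj p).G2 (G.X x p i)) :
    F.ff1 ((G.obj p).D a) = (H.obj p).D (F.ff2 a) := by
  unfold ff1 ff2
  erw [(F.app p).map_D, (H.obj p).D_cast2]

theorem ff2_mul {x : (G.obj 0).Obj} {p : ℕ} {i : Fin (p + 1)}
    (a b : (G.obj p).G2 (G.X x p i)) :
    F.ff2 ((G.obj p).mul a b) = (H.obj p).mul (F.ff2 a) (F.ff2 b) := by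
  unfold ff2
  erw [(F.app p).map2_mul, (H.obj p).cast2_mul]

theorem ff2_inv2 {x : (G.obj 0).Obj} {p : ℕ} {i : Fin (p + 1)}
    (a : (G.obj p).G2 (G.X x p i)) :
    F.ff2 ((G.obj p).inv2 a) = (H.obj p).inv2 (F.ff2 a) := by
  unfold ff2
  erw [(F.app p).map2_inv2, (H.obj p).cast2_inv2]

theorem ff2_Ad {x x' : (G.obj 0).Obj} {p : ℕ} {i j : Fin (p + 1)}
    (g : (G.obj p).Hom (G.X x p i) (G.X x' p j)) (a : (G.obj p).G2 (G.X x p i)) :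
    F.ff2 ((G.obj p).Ad g a) = (H.obj p).Ad (F.ff1 g) (F.ff2 a) := by
  unfold ff2 ff1
  erw [(F.app p).map_Ad, (H.obj p).Ad_hcast]

theorem ff1_push1' {x x' : (G.obj 0).Obj} {p q : ℕ} (α : Fin (p + 1) →o Fin (q + 1))
    {i j : Fin (p + 1)} (g : (G.obj p).Hom (G.X x p i) (G.X x' p j)) :
    F.ff1 (G.push1' α g) = H.push1' α (F.ff1 g) := by
  have h := F.naturality α
  have e := CrossedGroupoidHom.congr_map1 h g
  rw [show ((H.map α).comp (F.app p)).map1 g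
      = (H.map α).map1 ((F.app p).map1 g) from rfl,
    show (((F.app q).comp (G.map α))).map1 g
      = (F.app q).map1 ((G.map α).map1 g) from rfl] at e
  unfold ff1
  unfold CosimplicialCrossedGroupoid.push1'
  erw [(F.app q).map1_hcast, (H.obj q).hcast_hcast,
    (H.map α).map1_hcast, (H.obj q).hcast_hcast, e, (H.obj q).hcast_hcast]
  rfl

theorem ff2_push2 {x : (G.obj 0).Obj} {p q : ℕ} (α : Fin (p + 1) →o Fin (q + 1))
    {i : Fin (p + 1)} (a : (G.obj p).G2 (G.X x p i)) :
    F.ff2 (G.push2 α a) = H.push2 α (F.ff2 a) := by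
  have h := F.naturality α
  have e := CrossedGroupoidHom.congr_map2 h a
  rw [show ((H.map α).comp (F.app p)).map2 a
      = (H.map α).map2 ((F.app p).map2 a) from rfl,
    show (((F.app q).comp (G.map α))).map2 a
      = (F.app q).map2 ((G.map α).map2 a) from rfl] at e
  unfold ff2
  unfold CosimplicialCrossedGroupoid.push2
  erw [(F.app q).map2_cast2, (H.obj q).cast2_cast2,
    (H.map α).map2_cast2, (H.obj q).cast2_cast2, e, (H.obj q).cast2_cast2]
  rfl

theorem ff1_vtxMap {x x' : (G.obj 0).Obj} {q : ℕ} (i : Fin (q + 1))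
    (f : (G.obj 0).Hom x x') :
    F.ff1 ((G.map (vtxMap i)).map1 f) = (H.map (vtxMap i)).map1 ((F.app 0).map1 f) := by
  have h := F.naturality (vtxMap i : Fin 1 →o Fin (q + 1))
  have e := CrossedGroupoidHom.congr_map1 h f
  rw [show ((H.map (vtxMap i)).comp (F.app 0)).map1 f
      = (H.map (vtxMap i)).map1 ((F.app 0).map1 f) from rfl,
    show (((F.app q).comp (G.map (vtxMap i)))).map1 f
      = (F.app q).map1 ((G.map (vtxMap i)).map1 f) from rfl] at e
  unfold ff1
  erw [e]
  rfl

end CosimplicialMor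

/-! ### Extraction lemmas for the homotopy sets -/

namespace CrossedGroupoid

variable (K : CrossedGroupoid)

theorem pi0Rel_equivalence : Equivalence K.pi0Rel where
  refl := fun x => ⟨K.id x⟩
  symm := fun ⟨f⟩ => ⟨K.inv f⟩
  trans := fun ⟨f⟩ ⟨g⟩ => ⟨K.comp g f⟩

theorem pi0_exact {x y : K.Obj} (h : Quot.mk K.pi0Rel x = Quot.mk K.pi0Rel y) :
    Nonempty (K.Hom x y) :=
  (K.pi0Rel_equivalence.eqvGen_iff).mp (Quot.eq.mp h)

theorem homRel_equivalence (x y : K.Obj) : Equivalence (K.homRel x y) where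
  refl := fun g => ⟨K.one x, by rw [K.D_one, K.comp_id]⟩
  symm := fun {g g'} ⟨a, ha⟩ => ⟨K.inv2 a, by
    have : K.mul a (K.inv2 a) = K.one x := by
      rw [K.mul_def, K.inv2_def, K.one_def, mul_inv_cancel]
    rw [ha, K.comp_assoc, ← K.D_mul, this, K.D_one, K.comp_id]⟩
  trans := fun {g g' g''} ⟨a, ha⟩ ⟨b, hb⟩ =>
    ⟨K.mul a b, by rw [hb, ha, K.comp_assoc, K.D_mul]⟩

theorem homRel_exact {x y : K.Obj} {g g' : K.Hom x y}
    (h : Quot.mk (K.homRel x y) g = Quot.mk (K.homRel x y) g') :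
    K.homRel x y g g' :=
  ((K.homRel_equivalence x y).eqvGen_iff).mp (Quot.eq.mp h)

/-! ### Abstract computations in a crossed groupoid -/

theorem gauge_aux {w0 w1 v0 v1 : K.Obj} (phi0 : K.Hom w0 v0) (phi1 : K.Hom w1 v1)
    (gam : K.Hom w0 w1) (c b0 : K.G2 w0) (b1 : K.G2 w1) :
    K.comp (K.comp (K.comp (K.comp phi1 (K.D b1)) gam) (K.D c))
        (K.inv (K.comp phi0 (K.D b0)))
      = K.comp (K.comp (K.comp phi1 gam)
          (K.D (K.mul (K.mul (K.Ad (K.inv gam) b1) c) (K.inv2 b0)))) (K.inv phi0) := by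
  rw [K.D_mul, K.D_mul, K.D_inv2, K.D_Ad, K.inv_inv']
  simp only [K.comp_assoc, K.inv_comp'', K.inv_inv', K.inv_comp_cancel,
    K.comp_inv_cancel, K.inv_comp, K.comp_inv, K.id_comp, K.comp_id]

theorem gauge_aux2 {w0 w1 v0 v1 : K.Obj} (phi0 : K.Hom w0 v0) (phi1 : K.Hom w1 v1)
    (gam : K.Hom w0 w1) (d : K.Hom w0 w0) :
    K.comp (K.inv gam) (K.comp (K.inv phi1)
      (K.comp (K.comp (K.comp (K.comp phi1 gam) d) (K.inv phi0)) phi0)) = d := by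
  simp only [K.comp_assoc, K.inv_comp_cancel, K.comp_inv_cancel, K.inv_comp,
    K.comp_inv, K.id_comp, K.comp_id]

theorem gauge_aux3 {w0 w1 v0 v1 : K.Obj} (phi0 : K.Hom w0 v0) (phi1 : K.Hom w1 v1)
    (gam : K.Hom w0 w1) (gam' : K.Hom v0 v1) :
    K.comp (K.comp (K.comp phi1 gam)
      (K.comp (K.inv gam) (K.comp (K.inv phi1) (K.comp gam' phi0)))) (K.inv phi0)
      = gam' := by
  simp only [K.comp_assoc, K.inv_comp_cancel, K.comp_inv_cancel, K.inv_comp,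
    K.comp_inv, K.id_comp, K.comp_id]

theorem DT_aux {X0 X1 X2 Y0 Y1 Y2 : K.Obj}
    (v0 : K.Hom X0 Y0) (v1 : K.Hom X1 Y1) (v2 : K.Hom X2 Y2)
    (g01 : K.Hom X0 X1) (g12 : K.Hom X1 X2) (g02 : K.Hom X0 X2)
    (g01' : K.Hom Y0 Y1) (g12' : K.Hom Y1 Y2) (g02' : K.Hom Y0 Y2)
    (c01 c02 a : K.G2 X0) (c12 : K.G2 X1) (a' : K.G2 Y0)
    (hDa : K.D a = K.comp (K.comp (K.inv g02) g12) g01)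
    (hDa' : K.D a' = K.comp (K.comp (K.inv g02') g12') g01')
    (h01 : g01' = K.comp (K.comp (K.comp v1 g01) (K.D c01)) (K.inv v0))
    (h12 : g12' = K.comp (K.comp (K.comp v2 g12) (K.D c12)) (K.inv v1))
    (h02 : g02' = K.comp (K.comp (K.comp v2 g02) (K.D c02)) (K.inv v0)) :
    K.D (K.Ad v0 (K.mul (K.mul (K.mul (K.inv2 c02) a) (K.Ad (K.inv g01) c12)) c01))
      = K.D a' := by
  rw [hDa', h01, h12, h02, K.D_Ad, K.D_mul, K.D_mul, K.D_mul, K.D_inv2, K.D_Ad, hDa]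
  simp only [K.comp_assoc, K.inv_comp'', K.inv_inv', K.inv_comp_cancel,
    K.comp_inv_cancel, K.inv_comp, K.comp_inv, K.id_comp, K.comp_id]

theorem B_aux {X0 X1 X2 : K.Obj}
    (gam01 : K.Hom X0 X1) (gam12 : K.Hom X1 X2) (gam02 : K.Hom X0 X2)
    (A c01 c02 b0 : K.G2 X0) (c12 b1 : K.G2 X1) (b2 : K.G2 X2)
    (hDA : K.D A = K.comp (K.comp (K.inv gam02) gam12) gam01) :
    K.mul (K.mul (K.mul
        (K.inv2 (K.mul (K.mul (K.Ad (K.inv gam02) b2) c02) (K.inv2 b0))) A)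
        (K.Ad (K.inv gam01) (K.mul (K.mul (K.Ad (K.inv gam12) b2) c12) (K.inv2 b1))))
        (K.mul (K.mul (K.Ad (K.inv gam01) b1) c01) (K.inv2 b0))
      = K.Ad (K.D b0) (K.mul (K.mul (K.mul (K.inv2 c02) A) (K.Ad (K.inv gam01) c12)) c01) := by
  have hcmp : K.comp gam12 gam01 = K.comp gam02 (K.D A) := by
    rw [hDA]
    simp only [K.comp_assoc, K.inv_comp_cancel, K.comp_inv_cancel, K.inv_comp,
      K.comp_inv, K.id_comp, K.comp_id]
  have key : K.Ad (K.inv gam01) (K.Ad (K.inv gam12) b2)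
      = K.mul (K.mul (K.inv2 A) (K.Ad (K.inv gam02) b2)) A := by
    rw [← K.Ad_comp, ← K.inv_comp'', hcmp, K.inv_comp'', ← K.D_inv2, K.Ad_comp,
      K.peiffer, K.inv2_def, K.inv2_def, inv_inv]
  rw [K.Ad_mul, K.Ad_mul, K.Ad_inv2, key, K.peiffer]
  simp only [K.mul_def, K.inv2_def]
  group

end CrossedGroupoid

/-- injectivity half of the main theorem: if the images of two
descent data are gauge equivalent, then so are the descent data themselves. -/
theorem main_injective {G H : CosimplicialCrossedGroupoid} (F : CosimplicialMor G H)
    (hF : F.IsWeakEquiv) (P P' : G.Desc)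
    (him : ∃ (f : (H.obj 0).Hom (F.objD P.x) (F.objD P'.x))
      (c : (H.obj 1).G2 (H.X (F.objD P.x) 1 0)),
      H.IsGauge (F.objD P.x) (F.mapG P.g) (F.mapA P.a)
        (F.objD P'.x) (F.mapG P'.g) (F.mapA P'.a) f c) :
    G.GaugeEquiv P P' := by
  obtain ⟨f, c, hfc⟩ := him
  have hI := hfc.1
  have hII := hfc.2
  -- Step A: find a 1-morphism f₁ : x → x' in G⁰ using bijectivity on π₀
  have e0 : (F.app 0).pi0map (Quot.mk (G.obj 0).pi0Rel P.x)
      = (F.app 0).pi0map (Quot.mk (G.obj 0).pi0Rel P'.x) := Quot.sound ⟨f⟩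
  obtain ⟨f₁⟩ := (G.obj 0).pi0_exact ((hF 0).1.1 e0)
  -- Step B: adjust f₁ using surjectivity on π₁ so that f = F(f₀) ∘ D(b')
  obtain ⟨uq, huq⟩ := ((hF 0).2.1 P'.x).2 (Quot.mk ((H.obj 0).homRel _ _)
    ((H.obj 0).comp f ((H.obj 0).inv ((F.app 0).map1 f₁))))
  obtain ⟨u, rfl⟩ := Quot.exists_rep uq
  have h1 : Quot.mk ((H.obj 0).homRel _ _) ((F.app 0).map1 u)
      = Quot.mk ((H.obj 0).homRel _ _)
        ((H.obj 0).comp f ((H.obj 0).inv ((F.app 0).map1 f₁))) := huq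
  obtain ⟨b, hb⟩ := (H.obj 0).homRel_exact h1
  have hf : f = (H.obj 0).comp ((F.app 0).map1 ((G.obj 0).comp u f₁))
      ((H.obj 0).D ((H.obj 0).Ad ((H.obj 0).inv ((F.app 0).map1 f₁)) b)) := by
    rw [(F.app 0).map1_comp, (H.obj 0).D_Ad, (H.obj 0).inv_inv']
    have hstep : f = (H.obj 0).comp ((H.obj 0).comp f
        ((H.obj 0).inv ((F.app 0).map1 f₁))) ((F.app 0).map1 f₁) := by
      erw [(H.obj 0).comp_assoc, (H.obj 0).inv_comp, (H.obj 0).comp_id]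
    rw [hstep, hb]
    simp only [(H.obj 0).comp_assoc, (H.obj 0).inv_comp_cancel,
      (H.obj 0).comp_inv_cancel]
    exact (H.obj 0).comp_assoc _ _ _
  set f₀ := (G.obj 0).comp u f₁ with hf₀def
  set b' := (H.obj 0).Ad ((H.obj 0).inv ((F.app 0).map1 f₁)) b with hb'def
  -- vertex images of f at all levels
  have hvf : ∀ (q : ℕ) (i : Fin (q + 1)), (H.map (vtxMap i)).map1 f
      = (H.obj q).comp ((H.map (vtxMap i)).map1 ((F.app 0).map1 f₀))
        ((H.obj q).D ((H.map (vtxMap i)).map2 b')) := by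
    intro q i
    erw [hf, (H.map (vtxMap i)).map1_comp, (H.map (vtxMap i)).map_D]
    rfl
  -- Step C: the modified gauge 2-morphism in H
  set ctil := (H.obj 1).mul ((H.obj 1).mul ((H.obj 1).Ad ((H.obj 1).inv (F.mapG P.g))
      ((H.map (vtxMap (1 : Fin 2))).map2 b')) c)
      ((H.obj 1).inv2 ((H.map (vtxMap (0 : Fin 2))).map2 b')) with hctil
  have hC1 : F.mapG P'.g = (H.obj 1).comp ((H.obj 1).comp ((H.obj 1).comp
      ((H.map (vtxMap (1 : Fin 2))).map1 ((F.app 0).map1 f₀)) (F.mapG P.g))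
      ((H.obj 1).D ctil))
      ((H.obj 1).inv ((H.map (vtxMap (0 : Fin 2))).map1 ((F.app 0).map1 f₀))) := by
    rw [hI, hvf 1 1, hvf 1 0]
    exact (H.obj 1).gauge_aux _ _ _ _ _ _
  have hFh : F.ff1 ((G.obj 1).comp ((G.obj 1).inv P.g) ((G.obj 1).comp
      ((G.obj 1).inv ((G.map (vtxMap (1 : Fin 2))).map1 f₀))
      ((G.obj 1).comp P'.g ((G.map (vtxMap (0 : Fin 2))).map1 f₀)))) = (H.obj 1).D ctil := by
    erw [F.ff1_comp, F.ff1_comp, F.ff1_comp, F.ff1_inv, F.ff1_inv,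
      F.ff1_vtxMap, F.ff1_vtxMap, ← F.mapG_eq, ← F.mapG_eq, hC1]
    exact (H.obj 1).gauge_aux2 _ _ _ _
  have hmap1h : (F.app 1).map1 ((G.obj 1).comp ((G.obj 1).inv P.g) ((G.obj 1).comp
      ((G.obj 1).inv ((G.map (vtxMap (1 : Fin 2))).map1 f₀))
      ((G.obj 1).comp P'.g ((G.map (vtxMap (0 : Fin 2))).map1 f₀))))
      = (H.obj 1).D ((H.obj 1).cast2 (F.app_X P.x 1 0).symm ctil) := by
    have h2 : (H.obj 1).hcast (F.app_X P.x 1 0) (F.app_X P.x 1 0)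
        ((F.app 1).map1 ((G.obj 1).comp ((G.obj 1).inv P.g) ((G.obj 1).comp
      ((G.obj 1).inv ((G.map (vtxMap (1 : Fin 2))).map1 f₀))
      ((G.obj 1).comp P'.g ((G.map (vtxMap (0 : Fin 2))).map1 f₀))))) = (H.obj 1).D ctil := hFh
    have h3 := congrArg
      ((H.obj 1).hcast (F.app_X P.x 1 0).symm (F.app_X P.x 1 0).symm) h2
    rw [(H.obj 1).hcast_hcast, (H.obj 1).hcast_self] at h3
    erw [(H.obj 1).D_cast2]
    exact h3
  -- Step D: injectivity on π₁ produces c₀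
  have hcls : (F.app 1).pi1map (G.X P.x 1 0)
        (Quot.mk _ ((G.obj 1).id (G.X P.x 1 0)))
      = (F.app 1).pi1map (G.X P.x 1 0) (Quot.mk _ ((G.obj 1).comp ((G.obj 1).inv P.g) ((G.obj 1).comp
      ((G.obj 1).inv ((G.map (vtxMap (1 : Fin 2))).map1 f₀))
      ((G.obj 1).comp P'.g ((G.map (vtxMap (0 : Fin 2))).map1 f₀))))) := by
    show Quot.mk _ ((F.app 1).map1 ((G.obj 1).id (G.X P.x 1 0)))
      = Quot.mk _ ((F.app 1).map1 ((G.obj 1).comp ((G.obj 1).inv P.g) ((G.obj 1).comp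
      ((G.obj 1).inv ((G.map (vtxMap (1 : Fin 2))).map1 f₀))
      ((G.obj 1).comp P'.g ((G.map (vtxMap (0 : Fin 2))).map1 f₀)))))
    exact Quot.sound ⟨(H.obj 1).cast2 (F.app_X P.x 1 0).symm ctil, by
      rw [hmap1h, (F.app 1).map1_id, (H.obj 1).id_comp]⟩
  have hq := ((hF 1).2.1 (G.X P.x 1 0)).1 hcls
  obtain ⟨c₀, hc₀⟩ := (G.obj 1).homRel_exact hq
  rw [(G.obj 1).id_comp] at hc₀
  have hG1' : P'.g = (G.obj 1).comp ((G.obj 1).comp ((G.obj 1).comp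
      ((G.map (vtxMap (1 : Fin 2))).map1 f₀) P.g) ((G.obj 1).D c₀))
      ((G.obj 1).inv ((G.map (vtxMap (0 : Fin 2))).map1 f₀)) := by
    rw [← hc₀]
    exact ((G.obj 1).gauge_aux3 _ _ _ _).symm
  -- Step E: adjust c₀ using surjectivity on π₂
  have hDffc₀ : (H.obj 1).D (F.ff2 c₀) = (H.obj 1).D ctil := by
    rw [← F.ff1_D, ← hc₀]
    exact hFh
  have hDd : (H.obj 1).D ((H.obj 1).mul ctil ((H.obj 1).inv2 (F.ff2 c₀)))
      = (H.obj 1).id _ := by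
    rw [(H.obj 1).D_mul, (H.obj 1).D_inv2, hDffc₀, (H.obj 1).comp_inv]
  obtain ⟨⟨e₂, hDe₂⟩, he₂⟩ := ((hF 1).2.2 (G.X P.x 1 0)).2
    ⟨(H.obj 1).cast2 (F.app_X P.x 1 0).symm
      ((H.obj 1).mul ctil ((H.obj 1).inv2 (F.ff2 c₀))), by
      erw [(H.obj 1).D_cast2, hDd]
      exact (H.obj 1).hcast_id _⟩
  have he₂v : (F.app 1).map2 e₂ = (H.obj 1).cast2 (F.app_X P.x 1 0).symm
      ((H.obj 1).mul ctil ((H.obj 1).inv2 (F.ff2 c₀))) := congrArg Subtype.val he₂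
  have hffe₂ : F.ff2 e₂ = (H.obj 1).mul ctil ((H.obj 1).inv2 (F.ff2 c₀)) := by
    show (H.obj 1).cast2 (F.app_X P.x 1 0) ((F.app 1).map2 e₂) = _
    rw [he₂v, (H.obj 1).cast2_symm_cancel]
    rfl
  set c₁ := (G.obj 1).mul e₂ c₀ with hc₁def
  have hDc₁ : (G.obj 1).D c₁ = (G.obj 1).D c₀ := by
    rw [hc₁def, (G.obj 1).D_mul, hDe₂, (G.obj 1).id_comp]
  have hffc₁ : F.ff2 c₁ = ctil := by
    rw [hc₁def, F.ff2_mul, hffe₂, (H.obj 1).mul_def, (H.obj 1).mul_def,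
      (H.obj 1).inv2_def]
    exact inv_mul_cancel_right ctil (F.ff2 c₀)
  have hG1 : P'.g = (G.obj 1).comp ((G.obj 1).comp ((G.obj 1).comp
      ((G.map (vtxMap (1 : Fin 2))).map1 f₀) P.g) ((G.obj 1).D c₁))
      ((G.obj 1).inv ((G.map (vtxMap (0 : Fin 2))).map1 f₀)) := by
    rw [hDc₁]
    exact hG1'
  refine ⟨f₀, c₁, hG1, ?_⟩
  -- Step F: the 2-morphism condition, via injectivity on π₂
  have hpush : ∀ (i j : Fin 3) (hij : i ≤ j),
      G.push1 (edgeMap i j hij) P'.g = (G.obj 2).comp ((G.obj 2).comp ((G.obj 2).comp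
        ((G.map (vtxMap j)).map1 f₀) (G.push1 (edgeMap i j hij) P.g))
        ((G.obj 2).D (G.push2 (edgeMap i j hij) c₁)))
        ((G.obj 2).inv ((G.map (vtxMap i)).map1 f₀)) := by
    intro i j hij
    erw [G.push1_eq, hG1, G.push1'_comp, G.push1'_comp, G.push1'_comp, G.push1'_inv,
      G.push1'_D, G.push1'_edge_zero, G.push1'_edge_one, ← G.push1_eq]
    rfl
  have hDa : (G.obj 2).D P.a = (G.obj 2).comp ((G.obj 2).comp
      ((G.obj 2).inv (G.push1 (edgeMap 0 2 (by decide)) P.g))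
      (G.push1 (edgeMap 1 2 (by decide)) P.g)) (G.push1 (edgeMap 0 1 (by decide)) P.g) :=
    P.isDescent.1.symm
  have hDa' : (G.obj 2).D P'.a = (G.obj 2).comp ((G.obj 2).comp
      ((G.obj 2).inv (G.push1 (edgeMap 0 2 (by decide)) P'.g))
      (G.push1 (edgeMap 1 2 (by decide)) P'.g)) (G.push1 (edgeMap 0 1 (by decide)) P'.g) :=
    P'.isDescent.1.symm
  have hDt : (G.obj 2).D ((G.obj 2).Ad ((G.map (vtxMap (0 : Fin 3))).map1 f₀)
      ((G.obj 2).mul ((G.obj 2).mul ((G.obj 2).mul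
          ((G.obj 2).inv2 (G.push2 (edgeMap 0 2 (by decide)) c₁)) P.a)
          ((G.obj 2).Ad ((G.obj 2).inv (G.push1 (edgeMap 0 1 (by decide)) P.g))
            (G.push2 (edgeMap 1 2 (by decide)) c₁)))
        (G.push2 (edgeMap 0 1 (by decide)) c₁))) = (G.obj 2).D P'.a :=
    (G.obj 2).DT_aux _ _ _ _ _ _ _ _ _ _ _ _ _ _ hDa hDa'
      (hpush 0 1 (by decide)) (hpush 1 2 (by decide)) (hpush 0 2 (by decide))
  -- the image of P satisfies the 1-cocycle descent condition in H
  have hDA : (H.obj 2).D (F.mapA P.a) = (H.obj 2).comp ((H.obj 2).comp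
      ((H.obj 2).inv (H.push1 (edgeMap 0 2 (by decide)) (F.mapG P.g)))
      (H.push1 (edgeMap 1 2 (by decide)) (F.mapG P.g)))
      (H.push1 (edgeMap 0 1 (by decide)) (F.mapG P.g)) := by
    have h0 := P.isDescent.1
    have h1 := congrArg F.ff1 h0
    erw [F.ff1_comp, F.ff1_comp, F.ff1_inv, F.ff1_D] at h1
    erw [G.push1_eq, G.push1_eq, G.push1_eq, F.ff1_push1', F.ff1_push1', F.ff1_push1',
      ← F.mapG_eq, ← F.mapA_eq, ← H.push1_eq, ← H.push1_eq, ← H.push1_eq] at h1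
    exact h1.symm
  have hpushctil : ∀ (i j : Fin 3) (hij : i ≤ j), H.push2 (edgeMap i j hij) ctil
      = (H.obj 2).mul ((H.obj 2).mul ((H.obj 2).Ad
          ((H.obj 2).inv (H.push1 (edgeMap i j hij) (F.mapG P.g)))
          ((H.map (vtxMap j)).map2 b')) (H.push2 (edgeMap i j hij) c))
        ((H.obj 2).inv2 ((H.map (vtxMap i)).map2 b')) := by
    intro i j hij
    erw [hctil, H.push2_mul, H.push2_mul, H.push2_inv2, H.push2_Ad, H.push1'_inv,
      H.push2_edge_zero, H.push2_edge_one, ← H.push1_eq]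
  have hfft : F.ff2 ((G.obj 2).Ad ((G.map (vtxMap (0 : Fin 3))).map1 f₀)
      ((G.obj 2).mul ((G.obj 2).mul ((G.obj 2).mul
          ((G.obj 2).inv2 (G.push2 (edgeMap 0 2 (by decide)) c₁)) P.a)
          ((G.obj 2).Ad ((G.obj 2).inv (G.push1 (edgeMap 0 1 (by decide)) P.g))
            (G.push2 (edgeMap 1 2 (by decide)) c₁)))
        (G.push2 (edgeMap 0 1 (by decide)) c₁))) = F.mapA P'.a := by
    erw [F.ff2_Ad, F.ff2_mul, F.ff2_mul, F.ff2_mul, F.ff2_inv2, F.ff2_Ad, F.ff1_inv,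
      F.ff1_vtxMap]
    erw [G.push1_eq, F.ff1_push1', ← F.mapG_eq, ← H.push1_eq]
    erw [F.ff2_push2, F.ff2_push2, F.ff2_push2, hffc₁, ← F.mapA_eq]
    erw [hpushctil 0 1 (by decide), hpushctil 1 2 (by decide), hpushctil 0 2 (by decide)]
    erw [(H.obj 2).B_aux _ _ _ _ _ _ _ _ _ _ hDA]
    erw [← (H.obj 2).Ad_comp, ← hvf 2 0, ← hII]
  have h1 : F.ff2 ((G.obj 2).mul ((G.obj 2).inv2 P'.a) ((G.obj 2).Ad ((G.map (vtxMap (0 : Fin 3))).map1 f₀)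
      ((G.obj 2).mul ((G.obj 2).mul ((G.obj 2).mul
          ((G.obj 2).inv2 (G.push2 (edgeMap 0 2 (by decide)) c₁)) P.a)
          ((G.obj 2).Ad ((G.obj 2).inv (G.push1 (edgeMap 0 1 (by decide)) P.g))
            (G.push2 (edgeMap 1 2 (by decide)) c₁)))
        (G.push2 (edgeMap 0 1 (by decide)) c₁))))
      = (H.obj 2).one _ := by
    rw [F.ff2_mul, F.ff2_inv2, hfft, F.mapA_eq, (H.obj 2).mul_def,
      (H.obj 2).inv2_def, (H.obj 2).one_def, inv_mul_cancel]
  have h2 : (H.obj 2).cast2 (F.app_X P'.x 2 0)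
      ((F.app 2).map2 ((G.obj 2).mul ((G.obj 2).inv2 P'.a) ((G.obj 2).Ad ((G.map (vtxMap (0 : Fin 3))).map1 f₀)
      ((G.obj 2).mul ((G.obj 2).mul ((G.obj 2).mul
          ((G.obj 2).inv2 (G.push2 (edgeMap 0 2 (by decide)) c₁)) P.a)
          ((G.obj 2).Ad ((G.obj 2).inv (G.push1 (edgeMap 0 1 (by decide)) P.g))
            (G.push2 (edgeMap 1 2 (by decide)) c₁)))
        (G.push2 (edgeMap 0 1 (by decide)) c₁)))))
      = (H.obj 2).one _ := h1
  have hval : (F.app 2).map2 ((G.obj 2).mul ((G.obj 2).inv2 P'.a) ((G.obj 2).Ad ((G.map (vtxMap (0 : Fin 3))).map1 f₀)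
      ((G.obj 2).mul ((G.obj 2).mul ((G.obj 2).mul
          ((G.obj 2).inv2 (G.push2 (edgeMap 0 2 (by decide)) c₁)) P.a)
          ((G.obj 2).Ad ((G.obj 2).inv (G.push1 (edgeMap 0 1 (by decide)) P.g))
            (G.push2 (edgeMap 1 2 (by decide)) c₁)))
        (G.push2 (edgeMap 0 1 (by decide)) c₁))))
      = (H.obj 2).one _ := by
    calc (F.app 2).map2 ((G.obj 2).mul ((G.obj 2).inv2 P'.a) ((G.obj 2).Ad ((G.map (vtxMap (0 : Fin 3))).map1 f₀)
      ((G.obj 2).mul ((G.obj 2).mul ((G.obj 2).mul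
          ((G.obj 2).inv2 (G.push2 (edgeMap 0 2 (by decide)) c₁)) P.a)
          ((G.obj 2).Ad ((G.obj 2).inv (G.push1 (edgeMap 0 1 (by decide)) P.g))
            (G.push2 (edgeMap 1 2 (by decide)) c₁)))
        (G.push2 (edgeMap 0 1 (by decide)) c₁))))
        = (H.obj 2).cast2 (F.app_X P'.x 2 0).symm ((H.obj 2).cast2 (F.app_X P'.x 2 0)
          ((F.app 2).map2 ((G.obj 2).mul ((G.obj 2).inv2 P'.a) ((G.obj 2).Ad ((G.map (vtxMap (0 : Fin 3))).map1 f₀)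
      ((G.obj 2).mul ((G.obj 2).mul ((G.obj 2).mul
          ((G.obj 2).inv2 (G.push2 (edgeMap 0 2 (by decide)) c₁)) P.a)
          ((G.obj 2).Ad ((G.obj 2).inv (G.push1 (edgeMap 0 1 (by decide)) P.g))
            (G.push2 (edgeMap 1 2 (by decide)) c₁)))
        (G.push2 (edgeMap 0 1 (by decide)) c₁)))))) :=
          ((H.obj 2).cast2_symm_cancel' _ _).symm
      _ = (H.obj 2).cast2 (F.app_X P'.x 2 0).symm ((H.obj 2).one _) := by rw [h2]
      _ = (H.obj 2).one _ := (H.obj 2).cast2_one _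
  have hDδ : (G.obj 2).D ((G.obj 2).mul ((G.obj 2).inv2 P'.a) ((G.obj 2).Ad ((G.map (vtxMap (0 : Fin 3))).map1 f₀)
      ((G.obj 2).mul ((G.obj 2).mul ((G.obj 2).mul
          ((G.obj 2).inv2 (G.push2 (edgeMap 0 2 (by decide)) c₁)) P.a)
          ((G.obj 2).Ad ((G.obj 2).inv (G.push1 (edgeMap 0 1 (by decide)) P.g))
            (G.push2 (edgeMap 1 2 (by decide)) c₁)))
        (G.push2 (edgeMap 0 1 (by decide)) c₁))))
      = (G.obj 2).id _ := by
    erw [(G.obj 2).D_mul, (G.obj 2).D_inv2, hDt, (G.obj 2).inv_comp]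
  have hpeq : (F.app 2).pi2map (G.X P'.x 2 0)
        ⟨(G.obj 2).mul ((G.obj 2).inv2 P'.a) ((G.obj 2).Ad ((G.map (vtxMap (0 : Fin 3))).map1 f₀)
      ((G.obj 2).mul ((G.obj 2).mul ((G.obj 2).mul
          ((G.obj 2).inv2 (G.push2 (edgeMap 0 2 (by decide)) c₁)) P.a)
          ((G.obj 2).Ad ((G.obj 2).inv (G.push1 (edgeMap 0 1 (by decide)) P.g))
            (G.push2 (edgeMap 1 2 (by decide)) c₁)))
        (G.push2 (edgeMap 0 1 (by decide)) c₁))), hDδ⟩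
      = (F.app 2).pi2map (G.X P'.x 2 0)
        ⟨(G.obj 2).one _, (G.obj 2).D_one _⟩ := by
    apply Subtype.ext
    show (F.app 2).map2 _ = (F.app 2).map2 ((G.obj 2).one _)
    rw [hval, (F.app 2).map2_one]
  have hδone := congrArg Subtype.val (((hF 2).2.2 (G.X P'.x 2 0)).1 hpeq)
  exact inv_mul_eq_one.mp hδone
end

section
/- Failure-of-1-cocycle compatibility under partial gauge transformation: let (x,g,a) be a descent datum in a cosimplicial crossed groupoid G and (f,c) a partial gauge transformation to a partial datum (x',g'), so g' = f_{(1)} ∘ g ∘ D(c) ∘ f_{(0)}⁻¹. Define a' := Ad(f_{(0)})(c_{(0,2)}⁻¹ ∘ a ∘ Ad(g_{(0,1)}⁻¹)(c_{(1,2)}) ∘ c_{(0,1)}). Then (g'_{(0,2)})⁻¹ ∘ g'_{(1,2)} ∘ g'_{(0,1)} = D(a') in the group G²₁(x'_{(0)}). -/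
/-! ### Auxiliary lemmas for the proof of `transport_cocycle1`. -/

namespace CrossedGroupoid

variable (G : CrossedGroupoid)

theorem mul_inv2 {x} (a : G.G2 x) : G.mul a (G.inv2 a) = G.one x := by
  have h : G.mul (G.inv2 (G.inv2 a)) (G.inv2 a) = G.one x := G.inv2_mul _
  calc G.mul a (G.inv2 a)
      = G.mul (G.one x) (G.mul a (G.inv2 a)) := (G.one_mul _).symm
    _ = G.mul (G.mul (G.inv2 (G.inv2 a)) (G.inv2 a)) (G.mul a (G.inv2 a)) := by rw [h]
    _ = G.mul (G.inv2 (G.inv2 a)) (G.mul (G.mul (G.inv2 a) a) (G.inv2 a)) := by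
        rw [G.mul_assoc, G.mul_assoc]
    _ = G.mul (G.inv2 (G.inv2 a)) (G.inv2 a) := by rw [G.inv2_mul, G.one_mul]
    _ = G.one x := h

theorem inv_eq_of_comp_eq_id {x y} {f : G.Hom x y} {g : G.Hom y x}
    (h : G.comp g f = G.id x) : g = G.inv f := by
  calc g = G.comp g (G.comp f (G.inv f)) := by rw [G.comp_inv, G.comp_id]
    _ = G.comp (G.comp g f) (G.inv f) := (G.comp_assoc _ _ _).symm
    _ = G.inv f := by rw [h, G.id_comp]

theorem D_inv2_s16 {x} (a : G.G2 x) : G.D (G.inv2 a) = G.inv (G.D a) := by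
  apply G.inv_eq_of_comp_eq_id
  rw [← G.D_mul, G.inv2_mul, G.D_one]

theorem inv_comp' {x y z} (g : G.Hom y z) (f : G.Hom x y) :
    G.inv (G.comp g f) = G.comp (G.inv f) (G.inv g) := by
  symm; apply G.inv_eq_of_comp_eq_id
  rw [G.comp_assoc, ← G.comp_assoc (G.inv g), G.inv_comp, G.id_comp, G.inv_comp]

theorem inv_inv {x y} (f : G.Hom x y) : G.inv (G.inv f) = f := by
  symm; apply G.inv_eq_of_comp_eq_id
  exact G.comp_inv f

theorem inv_comp_cancel_left {x y z} (f : G.Hom y z) (g : G.Hom x y) :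
    G.comp (G.inv f) (G.comp f g) = g := by
  rw [← G.comp_assoc, G.inv_comp, G.id_comp]

theorem comp_inv_cancel_left {x y z} (f : G.Hom z y) (g : G.Hom x y) :
    G.comp f (G.comp (G.inv f) g) = g := by
  rw [← G.comp_assoc, G.comp_inv, G.id_comp]

theorem hcast_comp4 {a0 a1 b0 b1 a0' a1' b0' b1' : G.Obj}
    (ea0 : a0 = a0') (ea1 : a1 = a1') (eb0 : b0 = b0') (eb1 : b1 = b1')
    (m1 : G.Hom a1 b1) (mg : G.Hom a0 a1) (md : G.Hom a0 a0) (m0 : G.Hom a0 b0) :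
    G.hcast eb0 eb1 (G.comp (G.comp (G.comp m1 mg) md) (G.inv m0))
      = G.comp (G.comp (G.comp (G.hcast ea1 eb1 m1) (G.hcast ea0 ea1 mg))
          (G.hcast ea0 ea0 md)) (G.inv (G.hcast ea0 eb0 m0)) := by
  subst ea0 ea1 eb0 eb1; rfl

theorem hcast_D' {x x'} (e : x = x') (a : G.G2 x) :
    G.hcast e e (G.D a) = G.D (G.cast2 e a) := by subst e; rfl

theorem cocycle_key {a0 a1 a2 b0 b1 b2 : G.Obj} (F0 : G.Hom a0 b0) (F1 : G.Hom a1 b1)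
    (F2 : G.Hom a2 b2) (g01 : G.Hom a0 a1) (g12 : G.Hom a1 a2) (g02 : G.Hom a0 a2)
    (d02 : G.Hom a0 a0) (d12 : G.Hom a1 a1) (d01 : G.Hom a0 a0) :
    G.comp (G.comp (G.inv (G.comp (G.comp (G.comp F2 g02) d02) (G.inv F0)))
      (G.comp (G.comp (G.comp F2 g12) d12) (G.inv F1)))
      (G.comp (G.comp (G.comp F1 g01) d01) (G.inv F0))
    = G.comp (G.comp F0 (G.comp (G.comp (G.comp (G.inv d02)
      (G.comp (G.comp (G.inv g02) g12) g01))
      (G.comp (G.comp (G.inv g01) d12) g01)) d01)) (G.inv F0) := by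
  simp only [CrossedGroupoid.comp_assoc, CrossedGroupoid.inv_comp',
    CrossedGroupoid.inv_inv, CrossedGroupoid.inv_comp_cancel_left,
    CrossedGroupoid.comp_inv_cancel_left, CrossedGroupoid.inv_comp,
    CrossedGroupoid.comp_inv, CrossedGroupoid.id_comp, CrossedGroupoid.comp_id]

end CrossedGroupoid

theorem CrossedGroupoidHom.map1_inv_s16 {G H : CrossedGroupoid} (F : CrossedGroupoidHom G H)
    {x y : G.Obj} (f : G.Hom x y) : F.map1 (G.inv f) = H.inv (F.map1 f) := by
  apply H.inv_eq_of_comp_eq_id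
  rw [← F.map1_comp, G.inv_comp, F.map1_id]

theorem CrossedGroupoidHom.map1_cast {G H : CrossedGroupoid}
    {F F' : CrossedGroupoidHom G H} (h : F = F') {x y : G.Obj} (f : G.Hom x y)
    (ex : F.obj x = F'.obj x) (ey : F.obj y = F'.obj y) :
    F'.map1 f = H.hcast ex ey (F.map1 f) := by subst h; rfl

namespace CosimplicialCrossedGroupoid

theorem map1_vtx1 (G : CosimplicialCrossedGroupoid) {x x' : (G.obj 0).Obj}
    (f : (G.obj 0).Hom x x') (i j : Fin 3) (h : i ≤ j) :
    (G.map (vtxMap j)).map1 f = (G.obj 2).hcast (G.X_push x (edgeMap i j h) 1)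
      (G.X_push x' (edgeMap i j h) 1)
      ((G.map (edgeMap i j h)).map1 ((G.map (vtxMap (1 : Fin 2))).map1 f)) :=
  CrossedGroupoidHom.map1_cast (F' := G.map (vtxMap j))
    (G.map_comp (edgeMap i j h) (vtxMap 1)).symm f _ _

theorem map1_vtx0 (G : CosimplicialCrossedGroupoid) {x x' : (G.obj 0).Obj}
    (f : (G.obj 0).Hom x x') (i j : Fin 3) (h : i ≤ j) :
    (G.map (vtxMap i)).map1 f = (G.obj 2).hcast (G.X_push x (edgeMap i j h) 0)
      (G.X_push x' (edgeMap i j h) 0)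
      ((G.map (edgeMap i j h)).map1 ((G.map (vtxMap (0 : Fin 2))).map1 f)) :=
  CrossedGroupoidHom.map1_cast (F' := G.map (vtxMap i))
    (G.map_comp (edgeMap i j h) (vtxMap 0)).symm f _ _

/-- Pushing a partially gauge-transformed 1-morphism to an edge (i,j) of Δ². -/
theorem push1_gauge (G : CosimplicialCrossedGroupoid) {x x' : (G.obj 0).Obj}
    (f : (G.obj 0).Hom x x') (g : (G.obj 1).Hom (G.X x 1 0) (G.X x 1 1))
    (c : (G.obj 1).G2 (G.X x 1 0))
    (g' : (G.obj 1).Hom (G.X x' 1 0) (G.X x' 1 1))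
    (hpartial : g' = (G.obj 1).comp ((G.obj 1).comp ((G.obj 1).comp
      ((G.map (vtxMap (1 : Fin 2))).map1 f) g) ((G.obj 1).D c))
      ((G.obj 1).inv ((G.map (vtxMap (0 : Fin 2))).map1 f)))
    (i j : Fin 3) (h : i ≤ j) :
    G.push1 (edgeMap i j h) g' = (G.obj 2).comp ((G.obj 2).comp ((G.obj 2).comp
      ((G.map (vtxMap j)).map1 f) (G.push1 (edgeMap i j h) g))
      ((G.obj 2).D (G.push2 (edgeMap i j h) c)))
      ((G.obj 2).inv ((G.map (vtxMap i)).map1 f)) := by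
  subst hpartial
  unfold push1 push2
  erw [CrossedGroupoidHom.map1_comp, CrossedGroupoidHom.map1_comp,
    CrossedGroupoidHom.map1_comp, CrossedGroupoidHom.map1_inv_s16,
    CrossedGroupoidHom.map_D,
    G.map1_vtx1 f i j h, G.map1_vtx0 f i j h,
    (G.obj 2).hcast_comp4 (G.X_push x (edgeMap i j h) 0) (G.X_push x (edgeMap i j h) 1)
      (G.X_push x' (edgeMap i j h) 0) (G.X_push x' (edgeMap i j h) 1),
    (G.obj 2).hcast_D']
  rfl

end CosimplicialCrossedGroupoid

/-- the failure-of-1-cocycle condition holds for the transported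
datum (x', g', a') with a' := transportA f g a c. -/
theorem transport_cocycle1 (G : CosimplicialCrossedGroupoid) (P : G.Desc)
    (x' : (G.obj 0).Obj) (g' : (G.obj 1).Hom (G.X x' 1 0) (G.X x' 1 1))
    (f : (G.obj 0).Hom P.x x') (c : (G.obj 1).G2 (G.X P.x 1 0))
    (hpartial : g' = (G.obj 1).comp ((G.obj 1).comp ((G.obj 1).comp
      ((G.map (vtxMap (1 : Fin 2))).map1 f) P.g) ((G.obj 1).D c))
      ((G.obj 1).inv ((G.map (vtxMap (0 : Fin 2))).map1 f))) :
    (G.obj 2).comp ((G.obj 2).comp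
        ((G.obj 2).inv (G.push1 (edgeMap 0 2 (by decide)) g'))
        (G.push1 (edgeMap 1 2 (by decide)) g'))
      (G.push1 (edgeMap 0 1 (by decide)) g')
      = (G.obj 2).D (G.transportA f P.g P.a c) := by
  obtain ⟨h1, -⟩ := P.isDescent
  rw [G.push1_gauge f P.g c g' hpartial 0 2 (by decide),
      G.push1_gauge f P.g c g' hpartial 1 2 (by decide),
      G.push1_gauge f P.g c g' hpartial 0 1 (by decide)]
  unfold CosimplicialCrossedGroupoid.transportA
  erw [(G.obj 2).D_Ad, (G.obj 2).D_mul, (G.obj 2).D_mul, (G.obj 2).D_mul,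
      (G.obj 2).D_inv2_s16, (G.obj 2).D_Ad, (G.obj 2).inv_inv, ← h1]
  exact (G.obj 2).cocycle_key _ _ _ _ _ _ _ _ _
end
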